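/- There exists an absolute constant C > 0 with the following property. Let Q ≥ 2 and Q ≤ R ≤ 4Q² be reals. Let E be the set of pairs of integers (q, q′) with Q ≤ q, q′ < 2Q and R ≤ lcm(q, q′) < 2R. For an integer q with Q ≤ q < 2Q and an integer r, set m_q(r) = #{q′ : (q, q′) ∈ E and lcm(q, q′) = r}. Then for every real m₀ ≥ 1: #{(q, q′) ∈ E : m_q(lcm(q, q′)) ≥ m₀} ≤ C m₀^{−1} R log Q. -/

import Mathlib

open Finset

lemma window_card (s : Finset ℕ) (α β : ℝ) (hα : 0 ≤ α) (h1 : 0 ≤ β - α + 1)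
    (hs : ∀ m ∈ s, α ≤ (m : ℝ) ∧ (m : ℝ) < β) : (s.card : ℝ) ≤ β - α + 1 := by
  rcases s.eq_empty_or_nonempty with h | ⟨m0, hm0⟩
  · simp [h]; linarith
  have hβ0 : 0 < β := lt_of_le_of_lt (by positivity) (hs m0 hm0).2
  have hsub : s ⊆ Finset.Ico ⌈α⌉₊ ⌈β⌉₊ := by
    intro m hm
    obtain ⟨h1', h2'⟩ := hs m hm
    rw [Finset.mem_Ico]
    exact ⟨Nat.ceil_le.mpr h1', Nat.lt_ceil.mpr h2'⟩
  have hc := Finset.card_le_card hsub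
  rw [Nat.card_Ico] at hc
  rcases le_or_gt ⌈β⌉₊ ⌈α⌉₊ with hba | hba
  · have : s.card = 0 := by omega
    rw [this]; simpa using h1
  · have hcast : ((⌈β⌉₊ - ⌈α⌉₊ : ℕ) : ℝ) = (⌈β⌉₊ : ℝ) - (⌈α⌉₊ : ℝ) := by
      rw [Nat.cast_sub hba.le]
    have h2 : ((⌈β⌉₊ : ℝ)) < β + 1 := Nat.ceil_lt_add_one hβ0.le
    have h3 : α ≤ (⌈α⌉₊ : ℝ) := Nat.le_ceil α
    have : (s.card : ℝ) ≤ ((⌈β⌉₊ - ⌈α⌉₊ : ℕ) : ℝ) := by exact_mod_cast hc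
    rw [hcast] at this
    linarith

lemma mult_window_card (s : Finset ℕ) (L : ℕ) (hL : 0 < L) (α β : ℝ) (hα : 0 ≤ α)
    (hβα : α ≤ β) (hs : ∀ m ∈ s, L ∣ m ∧ α ≤ (m : ℝ) ∧ (m : ℝ) < β) :
    (s.card : ℝ) ≤ (β - α) / L + 1 := by
  have hL' : (0:ℝ) < L := by exact_mod_cast hL
  have hcard : s.card = (s.image (· / L)).card := by
    rw [Finset.card_image_of_injOn]
    intro x hx y hy hxy
    have hdx := (hs x hx).1
    have hdy := (hs y hy).1
    simp only at hxy
    rw [← Nat.div_mul_cancel hdx, ← Nat.div_mul_cancel hdy, hxy]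
  rw [hcard]
  have := window_card (s.image (· / L)) (α / L) (β / L) (by positivity)
    (by have : 0 ≤ (β - α)/L := div_nonneg (by linarith) hL'.le
        rw [sub_div] at this; linarith) ?_
  · rw [sub_div] at *; linarith
  · intro m hm
    obtain ⟨x, hx, rfl⟩ := Finset.mem_image.mp hm
    obtain ⟨hd, hx1, hx2⟩ := hs x hx
    have hxL : ((x / L : ℕ) : ℝ) = (x : ℝ) / L := by
      rw [Nat.cast_div hd (by exact_mod_cast hL.ne')]
    rw [hxL]
    exact ⟨by gcongr, by gcongr⟩

lemma inv_window_sum (s : Finset ℕ) (β : ℝ)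
    (hs : ∀ v ∈ s, 1 ≤ v ∧ β ≤ 4 * (v : ℝ) ∧ (v : ℝ) < β) :
    (∑ v ∈ s, (1 / (v : ℝ))) ≤ 7 := by
  rcases s.eq_empty_or_nonempty with h | ⟨v0, hv0⟩
  · norm_num [h]
  have hβ : 1 < β := by
    have h1 := (hs v0 hv0).1
    have h2 := (hs v0 hv0).2.2
    have : (1:ℝ) ≤ (v0:ℝ) := by exact_mod_cast h1
    linarith
  have hterm : ∀ v ∈ s, (1 / (v : ℝ)) ≤ 4 / β := by
    intro v hv
    obtain ⟨h1, h4, _⟩ := hs v hv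
    have hv0' : (0:ℝ) < v := by exact_mod_cast h1
    rw [div_le_div_iff₀ hv0' (by linarith)]
    linarith
  have hcard : (s.card : ℝ) ≤ β - β / 4 + 1 := by
    apply window_card s (β / 4) β (by linarith) (by linarith)
    intro m hm
    obtain ⟨h1, h4, h5⟩ := hs m hm
    exact ⟨by linarith, h5⟩
  calc (∑ v ∈ s, (1 / (v : ℝ))) ≤ s.card • (4 / β) := Finset.sum_le_card_nsmul s _ _ hterm
    _ = (s.card : ℝ) * (4 / β) := by rw [nsmul_eq_mul]
    _ ≤ (β - β / 4 + 1) * (4 / β) := by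
        apply mul_le_mul_of_nonneg_right hcard (by positivity)
    _ = 3 + 4 / β := by field_simp; ring
    _ ≤ 7 := by
        have : 4 / β ≤ 4 := by rw [div_le_iff₀ (by linarith)]; nlinarith
        linarith

lemma harmonic_le_log (N : ℕ) : ∑ d ∈ Finset.Icc 1 N, (1 / (d : ℝ)) ≤ 1 + Real.log N := by
  induction N with
  | zero => simp
  | succ n ih =>
    rcases Nat.eq_zero_or_pos n with rfl | hn
    · simp
    · rw [Finset.sum_Icc_succ_top (by omega : 1 ≤ n + 1)]
      have hn' : (0:ℝ) < n := by exact_mod_cast hn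
      have hlog : (1:ℝ)/((n:ℝ)+1) ≤ Real.log ((n:ℝ)+1) - Real.log n := by
        have h1 : Real.log ((n:ℝ)/((n:ℝ)+1)) ≤ (n:ℝ)/((n:ℝ)+1) - 1 :=
          Real.log_le_sub_one_of_pos (by positivity)
        rw [Real.log_div (by positivity) (by positivity)] at h1
        have h2 : (n:ℝ)/((n:ℝ)+1) - 1 = -(1/((n:ℝ)+1)) := by field_simp; ring
        rw [h2] at h1
        linarith
      push_cast
      push_cast at ih
      linarith

lemma inv_sq_tail (M N : ℕ) (hM : 1 ≤ M) : ∑ m ∈ Finset.Icc M N, (1 / (m : ℝ) ^ 2) ≤ 2 / (M:ℝ) := by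
  have hM' : (0:ℝ) < M := by exact_mod_cast hM
  rcases le_or_gt M N with h | h
  · rw [Finset.Icc_eq_cons_Ioc h, Finset.sum_cons]
    have htail := sum_Ioc_inv_sq_le_sub (α := ℝ) (k := M) (n := N) (by omega) h
    have hN' : (0:ℝ) < N := by
      have : (0:ℕ) < N := by omega
      exact_mod_cast this
    have h1 : (1:ℝ) / (M:ℝ)^2 ≤ 1 / M := by
      have h1M : (1:ℝ) ≤ M := by exact_mod_cast hM
      rw [div_le_div_iff₀ (by positivity) hM']
      nlinarith
    have h2 : (∑ m ∈ Finset.Ioc M N, (1 / (m : ℝ) ^ 2)) ≤ 1/(M:ℝ) - 1/N := by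
      simpa [one_div] using htail
    have h3 : (0:ℝ) ≤ 1/(N:ℝ) := by positivity
    have : (2:ℝ)/M = 1/M + 1/M := by ring
    rw [this]
    linarith
  · rw [Finset.Icc_eq_empty (by omega)]
    simp only [Finset.sum_empty]
    positivity

lemma inv_sq_filter_tail (N d : ℕ) (X : ℝ) (hd : 1 ≤ d) (hX : 0 < X) :
    ∑ m ∈ (Finset.Icc 1 N).filter (fun m : ℕ => X < (d : ℝ) * (m : ℝ)), (1 / (m : ℝ) ^ 2)
      ≤ 2 * d / X := by
  classical
  set M0 : ℕ := ⌊X / d⌋₊ + 1 with hM0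
  have hd' : (0:ℝ) < d := by exact_mod_cast hd
  have hsub : (Finset.Icc 1 N).filter (fun m : ℕ => X < (d : ℝ) * (m : ℝ)) ⊆ Finset.Icc M0 N := by
    intro m hm
    rw [Finset.mem_filter, Finset.mem_Icc] at hm
    obtain ⟨⟨h1, h2⟩, h3⟩ := hm
    rw [Finset.mem_Icc]
    refine ⟨?_, h2⟩
    have hXd : X / d < m := by rw [div_lt_iff₀ hd']; linarith [mul_comm (d:ℝ) (m:ℝ)]
    have := (Nat.floor_lt (by positivity : (0:ℝ) ≤ X / d)).mpr hXd
    omega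
  have h1 : ∑ m ∈ (Finset.Icc 1 N).filter (fun m : ℕ => X < (d : ℝ) * (m : ℝ)), (1 / (m : ℝ) ^ 2)
      ≤ ∑ m ∈ Finset.Icc M0 N, (1 / (m : ℝ) ^ 2) :=
    Finset.sum_le_sum_of_subset_of_nonneg hsub (by intro i _ _; positivity)
  have h2 := inv_sq_tail M0 N (by omega)
  have h3 : X / d < (M0 : ℝ) := by
    have := Nat.lt_floor_add_one (X / d)
    rw [hM0]; push_cast
    push_cast at this
    linarith
  have h4 : (2:ℝ) / M0 ≤ 2 * d / X := by
    have hM0' : (0:ℝ) < M0 := by positivity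
    rw [div_le_div_iff₀ hM0' hX]
    have h5 : X < d * M0 := by rw [← div_lt_iff₀' hd']; exact h3
    nlinarith
  linarith

lemma gcd_mul_lcm_div (q q' : ℕ) (hq : 0 < q) :
    Nat.gcd q q' * (Nat.lcm q q' / q) = q' := by
  obtain ⟨h, hh⟩ := Nat.dvd_lcm_left q q'
  have h2 : Nat.gcd q q' * Nat.lcm q q' = q * q' := Nat.gcd_mul_lcm q q'
  rw [hh, Nat.mul_div_cancel_left _ hq]
  rw [hh, ← mul_assoc, mul_comm (Nat.gcd q q') q, mul_assoc] at h2
  exact Nat.eq_of_mul_eq_mul_left hq h2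

/-- Membership of the pair `(q, q′)` in the set `E`: `Q ≤ q, q′ < 2Q` and
`R ≤ lcm(q, q′) < 2R`. -/
def memE (Q R : ℝ) (q q' : ℕ) : Prop :=
  Q ≤ (q : ℝ) ∧ (q : ℝ) < 2 * Q ∧ Q ≤ (q' : ℝ) ∧ (q' : ℝ) < 2 * Q ∧
    R ≤ (Nat.lcm q q' : ℝ) ∧ (Nat.lcm q q' : ℝ) < 2 * R

/-- `m_q(r) = #{q′ : (q, q′) ∈ E, lcm(q, q′) = r}`. -/
noncomputable def lcmMult (Q R : ℝ) (q r : ℕ) : ℕ :=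
  Set.ncard {q' : ℕ | memE Q R q q' ∧ Nat.lcm q q' = r}

set_option maxHeartbeats 10000000 in
/-- There is an absolute constant `C > 0` such that for all reals `2 ≤ Q ≤ R ≤ 4Q²`
and every `m₀ ≥ 1`, the number of pairs `(q, q′) ∈ E` with `m_q(lcm(q,q′)) ≥ m₀`
is at most `C m₀^{-1} R log Q`. -/
theorem atypical_lcm_pairs_bound :
    ∃ C : ℝ, 0 < C ∧
      ∀ Q R m₀ : ℝ, 2 ≤ Q → Q ≤ R → R ≤ 4 * Q ^ 2 → 1 ≤ m₀ →
        (Set.ncard {p : ℕ × ℕ | memE Q R p.1 p.2 ∧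
            m₀ ≤ (lcmMult Q R p.1 (Nat.lcm p.1 p.2) : ℝ)} : ℝ) ≤
          C * m₀⁻¹ * R * Real.log Q := by
  classical
  refine ⟨1300, by norm_num, ?_⟩
  intro Q R m₀ hQ hQR hR4 hm₀
  have hQ0 : (0:ℝ) < Q := by linarith
  have hR0 : (0:ℝ) < R := by linarith
  have hm₀0 : (0:ℝ) < m₀ := by linarith
  set n : ℕ := ⌈2 * Q⌉₊ with hn
  set nR : ℕ := ⌈2 * R⌉₊ with hnRdef
  have hlt_n : ∀ m : ℕ, (m:ℝ) < 2 * Q → m < n := by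
    intro m hm
    have : (m:ℝ) < (n:ℝ) := lt_of_lt_of_le hm (Nat.le_ceil _)
    exact_mod_cast this
  have hlt_nR : ∀ m : ℕ, (m:ℝ) < 2 * R → m < nR := by
    intro m hm
    have : (m:ℝ) < (nR:ℝ) := lt_of_lt_of_le hm (Nat.le_ceil _)
    exact_mod_cast this
  -- lcmMult as a Finset card
  have hmult : ∀ q r : ℕ, lcmMult Q R q r =
      ((Finset.Iio n).filter (fun q' => memE Q R q q' ∧ Nat.lcm q q' = r)).card := by
    intro q r
    rw [lcmMult, ← Set.ncard_coe_finset]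
    congr 1
    ext q'
    simp only [Finset.coe_filter, Finset.mem_Iio, Set.mem_setOf_eq]
    constructor
    · rintro ⟨h1, h2⟩
      exact ⟨hlt_n q' h1.2.2.2.1, h1, h2⟩
    · tauto
  set EF : Finset (ℕ × ℕ) :=
    (Finset.Iio n ×ˢ Finset.Iio n).filter (fun p => memE Q R p.1 p.2) with hEFdef
  set SF : Finset (ℕ × ℕ) :=
    EF.filter (fun p => m₀ ≤ (lcmMult Q R p.1 (Nat.lcm p.1 p.2) : ℝ)) with hSFdef
  have hset : {p : ℕ × ℕ | memE Q R p.1 p.2 ∧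
      m₀ ≤ (lcmMult Q R p.1 (Nat.lcm p.1 p.2) : ℝ)} = ↑SF := by
    ext p
    simp only [hSFdef, hEFdef, Finset.coe_filter, Finset.mem_filter, Finset.mem_product,
      Finset.mem_Iio, Set.mem_setOf_eq]
    constructor
    · rintro ⟨h1, h2⟩
      exact ⟨⟨⟨hlt_n _ h1.2.1, hlt_n _ h1.2.2.2.1⟩, h1⟩, h2⟩
    · tauto
  rw [hset, Set.ncard_coe_finset]
  -- Step B
  have hB : m₀ * SF.card ≤ ∑ p ∈ EF, (lcmMult Q R p.1 (Nat.lcm p.1 p.2) : ℝ) := by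
    calc m₀ * (SF.card:ℝ) = ∑ _p ∈ SF, m₀ := by rw [Finset.sum_const, nsmul_eq_mul]; ring
      _ ≤ ∑ p ∈ SF, (lcmMult Q R p.1 (Nat.lcm p.1 p.2) : ℝ) :=
          Finset.sum_le_sum (fun p hp => (Finset.mem_filter.mp hp).2)
      _ ≤ ∑ p ∈ EF, (lcmMult Q R p.1 (Nat.lcm p.1 p.2) : ℝ) :=
          Finset.sum_le_sum_of_subset_of_nonneg (Finset.filter_subset _ _)
            (fun p _ _ => by positivity)
  -- Step D : sum = card of sigma
  have hT : ∑ p ∈ EF, (lcmMult Q R p.1 (Nat.lcm p.1 p.2) : ℝ)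
      = ((EF.sigma (fun p => (Finset.Iio n).filter
          (fun q'' => memE Q R p.1 q'' ∧ Nat.lcm p.1 q'' = Nat.lcm p.1 p.2))).card : ℝ) := by
    rw [Finset.card_sigma]
    push_cast
    exact Finset.sum_congr rfl (fun p _ => by rw [hmult])
  set QuadF : Finset (ℕ × ℕ × ℕ × ℕ) :=
    ((Finset.Iio n) ×ˢ (Finset.Iio n) ×ˢ (Finset.Iio n) ×ˢ (Finset.Iio nR)).filter
      (fun x => x.2.1 ∣ x.1 ∧ x.2.2.1 ∣ x.1 ∧ 0 < x.2.2.2 ∧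
        Q ≤ (x.1:ℝ) ∧ (x.1:ℝ) < 2*Q ∧
        R ≤ (x.1:ℝ) * (x.2.2.2:ℝ) ∧ (x.1:ℝ) * (x.2.2.2:ℝ) < 2*R ∧
        Q ≤ (x.2.1:ℝ) * (x.2.2.2:ℝ) ∧ (x.2.1:ℝ) * (x.2.2.2:ℝ) < 2*Q ∧
        Q ≤ (x.2.2.1:ℝ) * (x.2.2.2:ℝ) ∧ (x.2.2.1:ℝ) * (x.2.2.2:ℝ) < 2*Q) with hQuadFdef
  have hInj : (EF.sigma (fun p => (Finset.Iio n).filter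
      (fun q'' => memE Q R p.1 q'' ∧ Nat.lcm p.1 q'' = Nat.lcm p.1 p.2))).card ≤ QuadF.card := by
    apply Finset.card_le_card_of_injOn
      (fun t => (t.1.1, Nat.gcd t.1.1 t.1.2, Nat.gcd t.1.1 t.2, Nat.lcm t.1.1 t.1.2 / t.1.1))
    · rintro ⟨⟨q, q'⟩, q''⟩ ht
      rw [Finset.mem_coe, Finset.mem_sigma] at ht
      obtain ⟨hp, hq''m⟩ := ht
      rw [hEFdef, Finset.mem_filter, Finset.mem_product] at hp
      rw [Finset.mem_filter] at hq''m
      obtain ⟨⟨hqn, hq'n⟩, hE1⟩ := hp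
      obtain ⟨hq''n, hE2, hlcm⟩ := hq''m
      dsimp only at hqn hq'n hq''n hE1 hE2 hlcm ⊢
      rw [Finset.mem_Iio] at hqn hq'n hq''n
      obtain ⟨hQq, hq2Q, hQq', hq'2Q, hRl, hl2R⟩ := hE1
      obtain ⟨_, _, hQq'', hq''2Q, _, _⟩ := hE2
      have hq0 : 0 < q := Nat.cast_pos.mp (lt_of_lt_of_le hQ0 hQq)
      have hq1r : (1:ℝ) ≤ q := by
        have : (1:ℕ) ≤ q := hq0
        exact_mod_cast this
      set h := Nat.lcm q q' / q with hhdef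
      have hlcm_eq : Nat.lcm q q' = q * h :=
        (Nat.mul_div_cancel' (Nat.dvd_lcm_left q q')).symm
      have hg'h : Nat.gcd q q' * h = q' := gcd_mul_lcm_div q q' hq0
      have hg''h : Nat.gcd q q'' * h = q'' := by
        have h2 := gcd_mul_lcm_div q q'' hq0
        rw [hlcm] at h2
        exact h2
      have hcastl : (Nat.lcm q q' : ℝ) = (q:ℝ) * (h:ℝ) := by
        rw [hlcm_eq]; push_cast; ring
      have hcast' : (Nat.gcd q q' : ℝ) * (h:ℝ) = (q':ℝ) := by
        exact_mod_cast congrArg (Nat.cast (R := ℝ)) hg'h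
      have hcast'' : (Nat.gcd q q'' : ℝ) * (h:ℝ) = (q'':ℝ) := by
        exact_mod_cast congrArg (Nat.cast (R := ℝ)) hg''h
      have hpos_h : 0 < h := by
        rcases Nat.eq_zero_or_pos h with h0 | h0
        · exfalso
          rw [h0, mul_zero] at hlcm_eq
          rw [hlcm_eq] at hRl
          simp only [Nat.cast_zero] at hRl
          linarith
        · exact h0
      have hhr : (0:ℝ) < (h:ℝ) := by exact_mod_cast hpos_h
      have hh2R : (h:ℝ) < 2*R := by
        rw [hcastl] at hl2R
        nlinarith
      simp only [hQuadFdef, Finset.mem_coe, Finset.mem_filter, Finset.mem_product, Finset.mem_Iio]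
      refine ⟨⟨hqn, ?_, ?_, hlt_nR h hh2R⟩,
        Nat.gcd_dvd_left q q', Nat.gcd_dvd_left q q'', hpos_h, hQq, hq2Q, ?_, ?_, ?_, ?_, ?_, ?_⟩
      · exact lt_of_le_of_lt (Nat.gcd_le_left q' hq0) hqn
      · exact lt_of_le_of_lt (Nat.gcd_le_left q'' hq0) hqn
      · rw [← hcastl]; exact hRl
      · rw [← hcastl]; exact hl2R
      · rw [hcast']; exact hQq'
      · rw [hcast']; exact hq'2Q
      · rw [hcast'']; exact hQq''
      · rw [hcast'']; exact hq''2Q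
    · rintro ⟨⟨q, q'⟩, q''⟩ ht ⟨⟨p, p'⟩, p''⟩ hs heq
      simp only [Prod.mk.injEq] at heq
      obtain ⟨hqp, hg1, hg2, hhh⟩ := heq
      rw [Finset.mem_coe, Finset.mem_sigma] at ht hs
      obtain ⟨htp, ht2⟩ := ht
      obtain ⟨hsp, hs2⟩ := hs
      rw [hEFdef, Finset.mem_filter] at htp hsp
      rw [Finset.mem_filter] at ht2 hs2
      dsimp only at htp hsp ht2 hs2 hqp hg1 hg2 hhh
      have hq0 : 0 < q := Nat.cast_pos.mp (lt_of_lt_of_le hQ0 htp.2.1)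
      subst hqp
      have hq' : q' = p' := by
        rw [← gcd_mul_lcm_div q q' hq0, ← gcd_mul_lcm_div q p' hq0, hg1, hhh]
      have hq'' : q'' = p'' := by
        have e1 : Nat.gcd q q'' * (Nat.lcm q q'' / q) = q'' := gcd_mul_lcm_div q q'' hq0
        have e2 : Nat.gcd q p'' * (Nat.lcm q p'' / q) = p'' := gcd_mul_lcm_div q p'' hq0
        rw [ht2.2.2] at e1
        rw [hs2.2.2] at e2
        rw [← e1, ← e2, hg2, hq']
      subst hq'; subst hq''
      rfl
  -- Step E
  set X : ℝ := Q^2/(2*R) with hXdef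
  have hX0 : 0 < X := by rw [hXdef]; positivity
  set GP : Finset (ℕ × ℕ) := ((Finset.Icc 1 n) ×ˢ (Finset.Icc 1 n)).filter
    (fun gg => X < (gg.1:ℝ) ∧ (gg.1:ℝ) ≤ 2*Q ∧ (gg.2:ℝ) ≤ 2*Q ∧
      (gg.2:ℝ) < 2*gg.1 ∧ (gg.1:ℝ) < 2*gg.2) with hGPdef
  have hmapsGP : ∀ x ∈ QuadF, (x.2.1, x.2.2.1) ∈ GP := by
    intro x hx
    simp only [hQuadFdef, Finset.mem_filter, Finset.mem_product, Finset.mem_Iio] at hx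
    obtain ⟨⟨hq_n, hg'_n, hg''_n, hh_nR⟩, hg'dvd, hg''dvd, hhpos, hQq, hq2Q, hRqh, hqh2R,
      hQg'h, hg'h2Q, hQg''h, hg''h2Q⟩ := hx
    have hqpos : 0 < x.1 := Nat.cast_pos.mp (lt_of_lt_of_le hQ0 hQq)
    have hg'pos : 0 < x.2.1 := Nat.pos_of_dvd_of_pos hg'dvd hqpos
    have hg''pos : 0 < x.2.2.1 := Nat.pos_of_dvd_of_pos hg''dvd hqpos
    have hg'le : (x.2.1:ℝ) ≤ (x.1:ℝ) := by exact_mod_cast Nat.le_of_dvd hqpos hg'dvd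
    have hg''le : (x.2.2.1:ℝ) ≤ (x.1:ℝ) := by exact_mod_cast Nat.le_of_dvd hqpos hg''dvd
    have hh' : (0:ℝ) < (x.2.2.2:ℝ) := by exact_mod_cast hhpos
    have hg'r : (0:ℝ) < (x.2.1:ℝ) := by exact_mod_cast hg'pos
    have hg''r : (0:ℝ) < (x.2.2.1:ℝ) := by exact_mod_cast hg''pos
    simp only [hGPdef, Finset.mem_filter, Finset.mem_product, Finset.mem_Icc]
    refine ⟨⟨⟨hg'pos, le_of_lt (lt_of_le_of_lt (Nat.le_of_dvd hqpos hg'dvd) hq_n)⟩,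
      ⟨hg''pos, le_of_lt (lt_of_le_of_lt (Nat.le_of_dvd hqpos hg''dvd) hq_n)⟩⟩,
      ?_, by linarith, by linarith, ?_, ?_⟩
    · -- X < g'
      rw [hXdef, div_lt_iff₀ (by linarith : (0:ℝ) < 2*R)]
      have hQh2R : Q * (x.2.2.2:ℝ) < 2*R := by nlinarith
      nlinarith [mul_le_mul_of_nonneg_left hQg'h hQ0.le,
        mul_lt_mul_of_pos_left hQh2R hg'r]
    · -- g'' < 2 g'
      have h1 : (x.2.2.1:ℝ) * (x.2.2.2:ℝ) < (2*(x.2.1:ℝ)) * (x.2.2.2:ℝ) := by nlinarith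
      exact lt_of_mul_lt_mul_right h1 hh'.le
    · -- g' < 2 g''
      have h1 : (x.2.1:ℝ) * (x.2.2.2:ℝ) < (2*(x.2.2.1:ℝ)) * (x.2.2.2:ℝ) := by nlinarith
      exact lt_of_mul_lt_mul_right h1 hh'.le
  have hE : (QuadF.card : ℝ) ≤ ∑ gg ∈ GP, 9*Q^2/((gg.1:ℝ) * (Nat.lcm gg.1 gg.2 : ℝ)) := by
    have hfibbound : ∀ gg ∈ GP,
        ((QuadF.filter (fun x => (x.2.1, x.2.2.1) = gg)).card : ℝ)
          ≤ 9*Q^2/((gg.1:ℝ) * (Nat.lcm gg.1 gg.2 : ℝ)) := by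
      intro gg hgg
      simp only [hGPdef, Finset.mem_filter, Finset.mem_product, Finset.mem_Icc] at hgg
      obtain ⟨⟨⟨hg1pos, hg1n⟩, hg2pos, hg2n⟩, hXg1, hg12Q, hg22Q, hg2lt, hg1lt⟩ := hgg
      set fib := QuadF.filter (fun x => (x.2.1, x.2.2.1) = gg) with hfibdef
      have hLpos : 0 < Nat.lcm gg.1 gg.2 := Nat.lcm_pos hg1pos hg2pos
      have hg1r : (0:ℝ) < (gg.1:ℝ) := by exact_mod_cast hg1pos
      have hLr : (0:ℝ) < (Nat.lcm gg.1 gg.2 : ℝ) := by exact_mod_cast hLpos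
      rcases fib.eq_empty_or_nonempty with hfe | ⟨x0, hx0⟩
      · rw [hfe]
        simp only [Finset.card_empty, Nat.cast_zero]
        positivity
      · obtain ⟨hx0Q, hgg_eq⟩ := Finset.mem_filter.mp hx0
        simp only [hQuadFdef, Finset.mem_filter, Finset.mem_product, Finset.mem_Iio] at hx0Q
        obtain ⟨_, hdvd1, hdvd2, _, hQx1, hx12Q, _⟩ := hx0Q
        have hq0pos : 0 < x0.1 := Nat.cast_pos.mp (lt_of_lt_of_le hQ0 hQx1)
        have hLdvd : Nat.lcm gg.1 gg.2 ∣ x0.1 := by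
          have e1 : x0.2.1 = gg.1 := congrArg Prod.fst hgg_eq
          have e2 : x0.2.2.1 = gg.2 := congrArg Prod.snd hgg_eq
          rw [← e1, ← e2]
          exact Nat.lcm_dvd hdvd1 hdvd2
        have hL2Q : (Nat.lcm gg.1 gg.2 : ℝ) ≤ 2*Q := by
          have h1 : (Nat.lcm gg.1 gg.2 : ℝ) ≤ (x0.1:ℝ) := by
            exact_mod_cast Nat.le_of_dvd hq0pos hLdvd
          linarith
        set Hs := fib.image (fun x : ℕ×ℕ×ℕ×ℕ => x.2.2.2) with hHsdef
        set Qs := fib.image (fun x : ℕ×ℕ×ℕ×ℕ => x.1) with hQsdef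
        have hmemfib : ∀ x ∈ fib, x.2.1 = gg.1 ∧ x.2.2.1 = gg.2 ∧ x.2.1 ∣ x.1 ∧
            x.2.2.1 ∣ x.1 ∧ Q ≤ (x.1:ℝ) ∧ (x.1:ℝ) < 2*Q ∧
            Q ≤ (x.2.1:ℝ)*(x.2.2.2:ℝ) ∧ (x.2.1:ℝ)*(x.2.2.2:ℝ) < 2*Q := by
          intro x hx
          obtain ⟨hxQ, hxe⟩ := Finset.mem_filter.mp hx
          simp only [hQuadFdef, Finset.mem_filter, Finset.mem_product, Finset.mem_Iio] at hxQ
          obtain ⟨_, d1, d2, _, a1, a2, _, _, a3, a4, _, _⟩ := hxQ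
          exact ⟨congrArg Prod.fst hxe, congrArg Prod.snd hxe, d1, d2, a1, a2, a3, a4⟩
        have hcard1 : fib.card ≤ Hs.card * Qs.card := by
          rw [← Finset.card_product]
          apply Finset.card_le_card_of_injOn (fun x => (x.2.2.2, x.1))
          · intro x hx
            exact Finset.mem_product.mpr
              ⟨Finset.mem_image_of_mem _ hx, Finset.mem_image_of_mem _ hx⟩
          · intro a ha b hb hab
            rw [Finset.mem_coe] at ha hb
            obtain ⟨e1, e2, _⟩ := hmemfib a ha
            obtain ⟨f1, f2, _⟩ := hmemfib b hb
            simp only [Prod.mk.injEq] at hab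
            obtain ⟨hab1, hab2⟩ := hab
            have : a.2.2.1 = b.2.2.1 := e2.trans f2.symm
            have h21 : a.2.1 = b.2.1 := e1.trans f1.symm
            rcases a with ⟨a1', a2', a3', a4'⟩
            rcases b with ⟨b1', b2', b3', b4'⟩
            simp only at hab1 hab2 h21 this
            simp [hab1, hab2, h21, this]
        have hHsb : (Hs.card:ℝ) ≤ Q/(gg.1:ℝ) + 1 := by
          have heq1 : 2*Q/(gg.1:ℝ) - Q/(gg.1:ℝ) = Q/(gg.1:ℝ) := by ring
          have := window_card Hs (Q/(gg.1:ℝ)) (2*Q/(gg.1:ℝ)) (by positivity)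
            (by rw [heq1]; positivity) ?_
          · linarith [this, heq1]
          · intro m hm
            obtain ⟨x, hx, rfl⟩ := Finset.mem_image.mp hm
            obtain ⟨e1, _, _, _, _, _, a3, a4⟩ := hmemfib x hx
            rw [e1] at a3 a4
            constructor
            · rw [div_le_iff₀ hg1r]; linarith [mul_comm (gg.1:ℝ) (x.2.2.2:ℝ), a3]
            · rw [lt_div_iff₀ hg1r]; linarith [mul_comm (gg.1:ℝ) (x.2.2.2:ℝ), a4]
        have hQsb : (Qs.card:ℝ) ≤ Q/(Nat.lcm gg.1 gg.2:ℝ) + 1 := by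
          have := mult_window_card Qs (Nat.lcm gg.1 gg.2) hLpos Q (2*Q) hQ0.le
            (by linarith) ?_
          · have heq2 : (2*Q - Q) = Q := by ring
            rw [heq2] at this
            exact this
          · intro m hm
            obtain ⟨x, hx, rfl⟩ := Finset.mem_image.mp hm
            obtain ⟨e1, e2, d1, d2, a1, a2, _, _⟩ := hmemfib x hx
            refine ⟨?_, a1, a2⟩
            rw [← e1, ← e2]
            exact Nat.lcm_dvd d1 d2
        have hA : Q/(gg.1:ℝ) + 1 ≤ 3*Q/(gg.1:ℝ) := by
          rw [div_add' _ _ _ hg1r.ne', div_le_div_iff₀ hg1r hg1r]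
          nlinarith
        have hB2 : Q/(Nat.lcm gg.1 gg.2:ℝ) + 1 ≤ 3*Q/(Nat.lcm gg.1 gg.2:ℝ) := by
          rw [div_add' _ _ _ hLr.ne', div_le_div_iff₀ hLr hLr]
          nlinarith
        calc (fib.card:ℝ) ≤ (Hs.card:ℝ) * (Qs.card:ℝ) := by exact_mod_cast hcard1
          _ ≤ (Q/(gg.1:ℝ)+1) * (Q/(Nat.lcm gg.1 gg.2:ℝ)+1) :=
              mul_le_mul hHsb hQsb (Nat.cast_nonneg _) (le_trans (Nat.cast_nonneg _) hHsb)
          _ ≤ (3*Q/(gg.1:ℝ)) * (3*Q/(Nat.lcm gg.1 gg.2:ℝ)) :=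
              mul_le_mul hA hB2 (by positivity) (by positivity)
          _ = 9*Q^2/((gg.1:ℝ) * (Nat.lcm gg.1 gg.2 : ℝ)) := by
              field_simp
              ring
    rw [Finset.card_eq_sum_card_fiberwise hmapsGP]
    push_cast
    exact Finset.sum_le_sum hfibbound
  -- Step F
  have hF : ∑ gg ∈ GP, 9*Q^2/((gg.1:ℝ) * (Nat.lcm gg.1 gg.2 : ℝ))
      ≤ ∑ g1 ∈ (Finset.Icc 1 n).filter (fun g : ℕ => X < (g:ℝ)),
          63*Q^2 * ((g1.divisors.card : ℝ)/(g1:ℝ)^2) := by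
    have hmaps1 : ∀ gg ∈ GP, gg.1 ∈ (Finset.Icc 1 n).filter (fun g : ℕ => X < (g:ℝ)) := by
      intro gg hgg
      simp only [hGPdef, Finset.mem_filter, Finset.mem_product, Finset.mem_Icc] at hgg ⊢
      exact ⟨hgg.1.1, hgg.2.1⟩
    rw [← Finset.sum_fiberwise_of_maps_to hmaps1
      (fun gg : ℕ×ℕ => 9*Q^2/((gg.1:ℝ) * (Nat.lcm gg.1 gg.2 : ℝ)))]
    apply Finset.sum_le_sum
    intro g1 hg1m
    simp only [Finset.mem_filter, Finset.mem_Icc] at hg1m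
    obtain ⟨⟨hg11, hg1n⟩, hXg1⟩ := hg1m
    have hg1pos : 0 < g1 := hg11
    have hg1r : (0:ℝ) < (g1:ℝ) := by exact_mod_cast hg11
    set fib1 := GP.filter (fun gg : ℕ×ℕ => gg.1 = g1) with hfib1def
    have hmem : ∀ gg ∈ fib1, gg.1 = g1 ∧ 0 < gg.2 ∧ gg.2 ≤ n ∧
        (gg.2:ℝ) < 2*(g1:ℝ) ∧ (g1:ℝ) < 2*(gg.2:ℝ) := by
      intro gg hgg
      obtain ⟨hgp, he⟩ := Finset.mem_filter.mp hgg
      simp only [hGPdef, Finset.mem_filter, Finset.mem_product, Finset.mem_Icc] at hgp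
      refine ⟨he, hgp.1.2.1, hgp.1.2.2, ?_, ?_⟩
      · rw [← he]; exact hgp.2.2.2.2.1
      · rw [← he]; exact hgp.2.2.2.2.2
    set ψ : ℕ×ℕ → ℕ×ℕ := fun gg => (Nat.gcd g1 gg.2, gg.2 / Nat.gcd g1 gg.2) with hψdef
    have hinjψ : ∀ a ∈ fib1, ∀ b ∈ fib1, ψ a = ψ b → a = b := by
      intro a ha b hb hab
      obtain ⟨ha1, ha2pos, _, _, _⟩ := hmem a ha
      obtain ⟨hb1, hb2pos, _, _, _⟩ := hmem b hb
      simp only [hψdef, Prod.mk.injEq] at hab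
      obtain ⟨h1, h2⟩ := hab
      have hda : Nat.gcd g1 a.2 ∣ a.2 := Nat.gcd_dvd_right _ _
      have hdb : Nat.gcd g1 b.2 ∣ b.2 := Nat.gcd_dvd_right _ _
      have h2eq : a.2 = b.2 := by
        rw [← Nat.mul_div_cancel' hda, h2, h1, Nat.mul_div_cancel' hdb]
      exact Prod.ext (ha1.trans hb1.symm) h2eq
    set DPf : Finset (ℕ×ℕ) := (g1.divisors ×ˢ Finset.Icc 1 (2*n)).filter
      (fun dv => (g1:ℝ) < 2*((dv.1:ℝ)*(dv.2:ℝ)) ∧ (dv.1:ℝ)*(dv.2:ℝ) < 2*(g1:ℝ)) with hDPfdef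
    have hgcdfacts : ∀ gg ∈ fib1, 0 < Nat.gcd g1 gg.2 ∧
        (Nat.gcd g1 gg.2 : ℝ) * ((gg.2 / Nat.gcd g1 gg.2 : ℕ) : ℝ) = (gg.2:ℝ) ∧
        Nat.lcm g1 gg.2 = g1 * (gg.2 / Nat.gcd g1 gg.2) := by
      intro gg hgg
      obtain ⟨h1, h2pos, _, _, _⟩ := hmem gg hgg
      have hdg : Nat.gcd g1 gg.2 ∣ gg.2 := Nat.gcd_dvd_right _ _
      have hgcdpos : 0 < Nat.gcd g1 gg.2 := Nat.gcd_pos_of_pos_left _ hg1pos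
      refine ⟨hgcdpos, ?_, ?_⟩
      · exact_mod_cast congrArg (Nat.cast (R := ℝ)) (Nat.mul_div_cancel' hdg)
      · apply Nat.eq_of_mul_eq_mul_left hgcdpos
        rw [Nat.gcd_mul_lcm, ← mul_assoc, mul_comm (Nat.gcd g1 gg.2) g1, mul_assoc,
          Nat.mul_div_cancel' hdg]
    have hsub2 : fib1.image ψ ⊆ DPf := by
      intro dv hdv
      obtain ⟨gg, hgg, rfl⟩ := Finset.mem_image.mp hdv
      obtain ⟨h1, h2pos, h2n, hw1, hw2⟩ := hmem gg hgg
      obtain ⟨hgcdpos, hcastdv, _⟩ := hgcdfacts gg hgg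
      have hdg : Nat.gcd g1 gg.2 ∣ gg.2 := Nat.gcd_dvd_right _ _
      simp only [hDPfdef, hψdef, Finset.mem_filter, Finset.mem_product, Finset.mem_Icc,
        Nat.mem_divisors]
      refine ⟨⟨⟨Nat.gcd_dvd_left _ _, by omega⟩, ?_, ?_⟩, ?_, ?_⟩
      · exact Nat.div_pos (Nat.le_of_dvd h2pos hdg) hgcdpos
      · exact le_trans (Nat.div_le_self _ _) (by omega)
      · rw [hcastdv]; exact hw2
      · rw [hcastdv]; exact hw1
    have heqsum : ∑ gg ∈ fib1, 9*Q^2/((gg.1:ℝ) * (Nat.lcm gg.1 gg.2 : ℝ))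
        = ∑ dv ∈ fib1.image ψ, 9*Q^2/((g1:ℝ)^2*(dv.2:ℝ)) := by
      rw [Finset.sum_image hinjψ]
      apply Finset.sum_congr rfl
      intro gg hgg
      obtain ⟨h1, h2pos, _, _, _⟩ := hmem gg hgg
      obtain ⟨hgcdpos, _, hlcmeq⟩ := hgcdfacts gg hgg
      rw [h1, hlcmeq]
      simp only [hψdef]
      push_cast
      ring
    have hinner2 : ∀ d ∈ g1.divisors,
        (∑ v ∈ Finset.Icc 1 (2*n), if (g1:ℝ) < 2*((d:ℝ)*(v:ℝ)) ∧ (d:ℝ)*(v:ℝ) < 2*(g1:ℝ)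
          then 9*Q^2/((g1:ℝ)^2*(v:ℝ)) else 0) ≤ 63*Q^2/(g1:ℝ)^2 := by
      intro d hd
      have hdpos : 0 < d := Nat.pos_of_mem_divisors hd
      have hdr : (0:ℝ) < (d:ℝ) := by exact_mod_cast hdpos
      rw [← Finset.sum_filter]
      have heq3 : ∀ v ∈ (Finset.Icc 1 (2*n)).filter
          (fun v : ℕ => (g1:ℝ) < 2*((d:ℝ)*(v:ℝ)) ∧ (d:ℝ)*(v:ℝ) < 2*(g1:ℝ)),
          9*Q^2/((g1:ℝ)^2*(v:ℝ)) = (9*Q^2/(g1:ℝ)^2) * (1/(v:ℝ)) := by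
        intro v hv
        have hv1 : 1 ≤ v := (Finset.mem_Icc.mp (Finset.mem_filter.mp hv).1).1
        have hvr : (0:ℝ) < (v:ℝ) := by exact_mod_cast hv1
        field_simp
      rw [Finset.sum_congr rfl heq3, ← Finset.mul_sum]
      have hsum7 : (∑ v ∈ (Finset.Icc 1 (2*n)).filter
          (fun v : ℕ => (g1:ℝ) < 2*((d:ℝ)*(v:ℝ)) ∧ (d:ℝ)*(v:ℝ) < 2*(g1:ℝ)), (1/(v:ℝ))) ≤ 7 := by
        apply inv_window_sum _ (2*(g1:ℝ)/(d:ℝ))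
        intro v hv
        obtain ⟨hvIcc, hc1, hc2⟩ := Finset.mem_filter.mp hv
        have hv1 : 1 ≤ v := (Finset.mem_Icc.mp hvIcc).1
        have hvr : (0:ℝ) < (v:ℝ) := by exact_mod_cast hv1
        refine ⟨hv1, ?_, ?_⟩
        · rw [div_le_iff₀ hdr]
          nlinarith
        · rw [lt_div_iff₀ hdr]
          nlinarith
      calc (9*Q^2/(g1:ℝ)^2) * (∑ v ∈ (Finset.Icc 1 (2*n)).filter
            (fun v : ℕ => (g1:ℝ) < 2*((d:ℝ)*(v:ℝ)) ∧ (d:ℝ)*(v:ℝ) < 2*(g1:ℝ)), (1/(v:ℝ)))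
          ≤ (9*Q^2/(g1:ℝ)^2) * 7 := mul_le_mul_of_nonneg_left hsum7 (by positivity)
        _ = 63*Q^2/(g1:ℝ)^2 := by ring
    calc ∑ gg ∈ fib1, 9*Q^2/((gg.1:ℝ) * (Nat.lcm gg.1 gg.2 : ℝ))
        = ∑ dv ∈ fib1.image ψ, 9*Q^2/((g1:ℝ)^2*(dv.2:ℝ)) := heqsum
      _ ≤ ∑ dv ∈ DPf, 9*Q^2/((g1:ℝ)^2*(dv.2:ℝ)) :=
          Finset.sum_le_sum_of_subset_of_nonneg hsub2 (fun dv _ _ => by positivity)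
      _ = ∑ d ∈ g1.divisors, ∑ v ∈ Finset.Icc 1 (2*n),
            (if (g1:ℝ) < 2*((d:ℝ)*(v:ℝ)) ∧ (d:ℝ)*(v:ℝ) < 2*(g1:ℝ)
              then 9*Q^2/((g1:ℝ)^2*(v:ℝ)) else 0) := by
          rw [hDPfdef, Finset.sum_filter, Finset.sum_product]
      _ ≤ ∑ _d ∈ g1.divisors, 63*Q^2/(g1:ℝ)^2 := Finset.sum_le_sum hinner2
      _ = 63*Q^2 * ((g1.divisors.card : ℝ)/(g1:ℝ)^2) := by
          rw [Finset.sum_const, nsmul_eq_mul]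
          ring
  -- Step G
  have hG : ∑ g1 ∈ (Finset.Icc 1 n).filter (fun g : ℕ => X < (g:ℝ)),
      63*Q^2 * ((g1.divisors.card : ℝ)/(g1:ℝ)^2)
      ≤ 126*Q^2/X * (1 + Real.log n) := by
    have hrw : ∀ g1 ∈ (Finset.Icc 1 n).filter (fun g : ℕ => X < (g:ℝ)),
        63*Q^2 * ((g1.divisors.card : ℝ)/(g1:ℝ)^2) = ∑ _d ∈ g1.divisors, 63*Q^2/(g1:ℝ)^2 := by
      intro g1 _
      rw [Finset.sum_const, nsmul_eq_mul]
      ring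
    set s1 : Finset ℕ := (Finset.Icc 1 n).filter (fun g : ℕ => X < (g:ℝ)) with hs1def
    set S1 : Finset ((_ : ℕ) × ℕ) := s1.sigma (fun g => g.divisors) with hS1def
    have hinj : ∀ p ∈ S1, ∀ q ∈ S1,
        (p.2, p.1 / p.2) = (q.2, q.1 / q.2) → p = q := by
      rintro ⟨a, b⟩ hp ⟨a', b'⟩ hq heq
      dsimp only at heq
      rw [Prod.mk.injEq] at heq
      obtain ⟨h1, h2⟩ := heq
      simp only [hS1def, Finset.mem_sigma] at hp hq
      have hb : b ∣ a := (Nat.mem_divisors.mp hp.2).1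
      have hb' : b' ∣ a' := (Nat.mem_divisors.mp hq.2).1
      have ha : a = a' := by
        rw [← Nat.mul_div_cancel' hb, h2, h1, Nat.mul_div_cancel' hb']
      subst ha; subst h1; rfl
    set PF : Finset (ℕ × ℕ) := ((Finset.Icc 1 n) ×ˢ (Finset.Icc 1 n)).filter
      (fun dm => X < (dm.1:ℝ)*(dm.2:ℝ)) with hPFdef
    have hsubPF : S1.image (fun p : (_ : ℕ) × ℕ => (p.2, p.1 / p.2)) ⊆ PF := by
      intro dm hdm
      obtain ⟨p, hp, rfl⟩ := Finset.mem_image.mp hdm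
      simp only [hS1def, Finset.mem_sigma, hs1def, Finset.mem_filter, Finset.mem_Icc]
        at hp
      obtain ⟨⟨⟨ha1, ha2⟩, haX⟩, hd⟩ := hp
      have hbdvd : p.2 ∣ p.1 := (Nat.mem_divisors.mp hd).1
      have hane : p.1 ≠ 0 := (Nat.mem_divisors.mp hd).2
      have hbpos : 0 < p.2 := Nat.pos_of_mem_divisors hd
      have hble : p.2 ≤ p.1 := Nat.le_of_dvd (by omega) hbdvd
      have hqpos : 0 < p.1 / p.2 := Nat.div_pos hble hbpos
      have hqle : p.1 / p.2 ≤ p.1 := Nat.div_le_self _ _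
      simp only [hPFdef, Finset.mem_filter, Finset.mem_product, Finset.mem_Icc]
      refine ⟨⟨⟨hbpos, le_trans hble ha2⟩, ⟨hqpos, le_trans hqle ha2⟩⟩, ?_⟩
      have : (p.2:ℝ) * ((p.1 / p.2 : ℕ):ℝ) = (p.1:ℝ) := by
        exact_mod_cast congrArg (Nat.cast (R := ℝ)) (Nat.mul_div_cancel' hbdvd)
      rw [this]
      exact haX
    have hinner : ∀ d ∈ Finset.Icc 1 n,
        (∑ m ∈ Finset.Icc 1 n, if X < (d:ℝ)*(m:ℝ) then 63*Q^2/((d:ℝ)*(m:ℝ))^2 else 0)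
          ≤ (126*Q^2/X) * (1/(d:ℝ)) := by
      intro d hd
      have hd1 : 1 ≤ d := (Finset.mem_Icc.mp hd).1
      have hd' : (0:ℝ) < d := by exact_mod_cast hd1
      rw [← Finset.sum_filter]
      have heq : ∀ m ∈ (Finset.Icc 1 n).filter (fun m : ℕ => X < (d:ℝ)*(m:ℝ)),
          63*Q^2/((d:ℝ)*(m:ℝ))^2 = (63*Q^2/(d:ℝ)^2) * (1/(m:ℝ)^2) := by
        intro m hm
        have hm1 : 1 ≤ m := (Finset.mem_Icc.mp (Finset.mem_filter.mp hm).1).1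
        have hm' : (0:ℝ) < m := by exact_mod_cast hm1
        field_simp
      rw [Finset.sum_congr rfl heq, ← Finset.mul_sum]
      calc (63*Q^2/(d:ℝ)^2) * (∑ m ∈ (Finset.Icc 1 n).filter (fun m : ℕ => X < (d:ℝ)*(m:ℝ)),
              (1/(m:ℝ)^2))
          ≤ (63*Q^2/(d:ℝ)^2) * (2*d/X) :=
            mul_le_mul_of_nonneg_left (inv_sq_filter_tail n d X hd1 hX0) (by positivity)
        _ = (126*Q^2/X) * (1/(d:ℝ)) := by field_simp; ring
    calc ∑ g1 ∈ s1, 63*Q^2 * ((g1.divisors.card : ℝ)/(g1:ℝ)^2)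
        = ∑ g1 ∈ s1, ∑ _d ∈ g1.divisors, 63*Q^2/(g1:ℝ)^2 := Finset.sum_congr rfl hrw
      _ = ∑ x ∈ S1, 63*Q^2/(x.1:ℝ)^2 := by rw [hS1def, Finset.sum_sigma]
      _ = ∑ dm ∈ S1.image (fun p : (_ : ℕ) × ℕ => (p.2, p.1 / p.2)),
            63*Q^2/((dm.1:ℝ)*(dm.2:ℝ))^2 := by
          rw [Finset.sum_image hinj]
          apply Finset.sum_congr rfl
          intro p hp
          have hd : p.2 ∣ p.1 := (Nat.mem_divisors.mp (Finset.mem_sigma.mp hp).2).1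
          have : (p.2:ℝ) * ((p.1 / p.2 : ℕ):ℝ) = (p.1:ℝ) := by
            exact_mod_cast congrArg (Nat.cast (R := ℝ)) (Nat.mul_div_cancel' hd)
          rw [this]
      _ ≤ ∑ dm ∈ PF, 63*Q^2/((dm.1:ℝ)*(dm.2:ℝ))^2 :=
          Finset.sum_le_sum_of_subset_of_nonneg hsubPF (fun dm _ _ => by positivity)
      _ = ∑ d ∈ Finset.Icc 1 n, ∑ m ∈ Finset.Icc 1 n,
            (if X < (d:ℝ)*(m:ℝ) then 63*Q^2/((d:ℝ)*(m:ℝ))^2 else 0) := by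
          rw [hPFdef, Finset.sum_filter, Finset.sum_product]
      _ ≤ ∑ d ∈ Finset.Icc 1 n, (126*Q^2/X) * (1/(d:ℝ)) := Finset.sum_le_sum hinner
      _ = (126*Q^2/X) * ∑ d ∈ Finset.Icc 1 n, (1/(d:ℝ)) := by rw [Finset.mul_sum]
      _ ≤ 126*Q^2/X * (1 + Real.log n) :=
          mul_le_mul_of_nonneg_left (harmonic_le_log n) (by positivity)
  -- Final numeric assembly
  have hlogn : 1 + Real.log n ≤ 5 * Real.log Q := by
    have hn1 : (1:ℝ) ≤ n := by
      calc (1:ℝ) ≤ 2*Q := by linarith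
        _ ≤ n := Nat.le_ceil _
    have hnQ : (n:ℝ) ≤ Q^3 := by
      have h1 : (n:ℝ) < 2*Q + 1 := Nat.ceil_lt_add_one (by linarith)
      nlinarith
    have h2 : Real.log n ≤ Real.log (Q^3) := Real.log_le_log (by linarith) hnQ
    rw [Real.log_pow] at h2
    have h3 : Real.log 2 ≤ Real.log Q := Real.log_le_log (by norm_num) hQ
    have h4 := Real.log_two_gt_d9
    push_cast at h2
    linarith
  have hfinal : 126*Q^2/X * (1 + Real.log n) ≤ 1260 * (R * Real.log Q) := by
    have hXval : 126*Q^2/X = 252 * R := by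
      rw [hXdef]; field_simp; ring
    rw [hXval]
    have hlogQ0 : 0 < Real.log Q := Real.log_pos (by linarith)
    have h1 : (0:ℝ) ≤ 252 * R := by linarith
    calc 252 * R * (1 + Real.log n) ≤ 252 * R * (5 * Real.log Q) := by
          apply mul_le_mul_of_nonneg_left hlogn h1
      _ = 1260 * (R * Real.log Q) := by ring
  have hchain : m₀ * SF.card ≤ 1260 * (R * Real.log Q) := by
    calc m₀ * SF.card ≤ _ := hB
      _ = _ := hT
      _ ≤ (QuadF.card : ℝ) := by exact_mod_cast hInj
      _ ≤ _ := hE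
      _ ≤ _ := hF
      _ ≤ _ := hG
      _ ≤ _ := hfinal
  have hlogQ0 : 0 < Real.log Q := Real.log_pos (by linarith)
  have hpos : (0:ℝ) ≤ R * Real.log Q * m₀⁻¹ := by positivity
  have hid : (SF.card:ℝ) = m₀ * SF.card * m₀⁻¹ := by field_simp
  rw [hid]
  calc m₀ * (SF.card:ℝ) * m₀⁻¹ ≤ 1260 * (R * Real.log Q) * m₀⁻¹ :=
        mul_le_mul_of_nonneg_right hchain (by positivity)
    _ = 1260 * m₀⁻¹ * R * Real.log Q := by ring
    _ ≤ 1300 * m₀⁻¹ * R * Real.log Q := by nlinarith [hpos]
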